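/- Let γ denote the Euler–Mascheroni constant and fix α ∈ ℝ. For t > 0 and λ > 0 define the complex-valued multiplier m_t(λ) := 2π / (2πα + log(λ/2) − log t + γ + iπ/2). Then for every t > 0 and λ > 0: |m_t(λ)| ≤ 4, and λ |m_t'(λ)| ≤ 8/π, where m_t'(λ) = −2π / (λ (2πα + log(λ/2) − log t + γ + iπ/2)²) is the derivative of m_t with respect to λ. -/

import Mathlib

open Complex Real

noncomputable section

lemma zim (x : ℝ) : ((x : ℂ) + Complex.I * (π : ℝ) / 2).im = π / 2 := by
  simp

lemma zabs (x : ℝ) : π / 2 ≤ ‖(x : ℂ) + Complex.I * (π : ℝ) / 2‖ := by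
  have := Complex.abs_im_le_norm ((x : ℂ) + Complex.I * (π : ℝ) / 2)
  rw [zim] at this
  calc π / 2 ≤ |π / 2| := le_abs_self _
    _ ≤ _ := this

lemma zne (x : ℝ) : ((x : ℂ) + Complex.I * (π : ℝ) / 2) ≠ 0 := by
  intro h
  have := zim x
  rw [h] at this
  simp at this
  linarith [Real.pi_pos]

theorem stmt_4 (α : ℝ) (m : ℝ → ℝ → ℂ)
    (hm : ∀ t lam : ℝ, m t lam = 2 * (π : ℂ) /
      ((2 * π * α + Real.log (lam / 2) - Real.log t + Real.eulerMascheroniConstant : ℝ)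
        + Complex.I * (π : ℝ) / 2))
    (t lam : ℝ) (ht : 0 < t) (hlam : 0 < lam) :
    ‖m t lam‖ ≤ 4 ∧
    HasDerivAt (m t)
      (-(2 * (π : ℂ)) / ((lam : ℂ) *
        ((2 * π * α + Real.log (lam / 2) - Real.log t + Real.eulerMascheroniConstant : ℝ)
          + Complex.I * (π : ℝ) / 2) ^ 2)) lam ∧
    lam * ‖(-(2 * (π : ℂ)) / ((lam : ℂ) *
        ((2 * π * α + Real.log (lam / 2) - Real.log t + Real.eulerMascheroniConstant : ℝ)
          + Complex.I * (π : ℝ) / 2) ^ 2))‖ ≤ 8 / π := by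
  set x : ℝ := 2 * π * α + Real.log (lam / 2) - Real.log t + Real.eulerMascheroniConstant with hx
  set z : ℂ := (x : ℂ) + Complex.I * (π : ℝ) / 2 with hz
  have hzne : z ≠ 0 := zne x
  have hzabs : π / 2 ≤ ‖z‖ := zabs x
  have hpi : (0:ℝ) < π := Real.pi_pos
  have hzpos : 0 < ‖z‖ := lt_of_lt_of_le (by positivity) hzabs
  refine ⟨?_, ?_, ?_⟩
  · rw [hm t lam]
    rw [norm_div]
    have h1 : ‖2 * (π : ℂ)‖ = 2 * π := by
      simp [Complex.norm_real, abs_of_pos hpi]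
    rw [h1]
    rw [div_le_iff₀ hzpos]
    calc 2 * π = 4 * (π / 2) := by ring
      _ ≤ 4 * ‖z‖ := by nlinarith
  · -- derivative
    have hxderiv : HasDerivAt (fun l : ℝ => 2 * π * α + Real.log (l / 2) - Real.log t + Real.eulerMascheroniConstant) (1 / lam) lam := by
      have h2 : HasDerivAt (fun l : ℝ => l / 2) (1/2) lam := by
        simpa using (hasDerivAt_id lam).div_const 2
      have hlog : HasDerivAt Real.log (lam / 2)⁻¹ (lam / 2) :=
        Real.hasDerivAt_log (show lam / 2 ≠ 0 by positivity)
      have := (hlog.comp lam h2)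
      have h3 : HasDerivAt (fun l : ℝ => Real.log (l / 2)) (1 / lam) lam := by
        refine this.congr_deriv ?_
        rw [one_div, ← mul_inv, div_mul_cancel₀ _ two_ne_zero, one_div]
      simpa using ((h3.const_add (2 * π * α)).sub_const (Real.log t)).add_const Real.eulerMascheroniConstant
    have hg : HasDerivAt (fun l : ℝ => ((2 * π * α + Real.log (l / 2) - Real.log t + Real.eulerMascheroniConstant : ℝ) : ℂ) + Complex.I * (π : ℝ) / 2) ((1 / lam : ℝ) : ℂ) lam :=
      (hxderiv.ofReal_comp).add_const _
    have hzne' : ((2 * π * α + Real.log (lam / 2) - Real.log t + Real.eulerMascheroniConstant : ℝ) : ℂ) + Complex.I * (π : ℝ) / 2 ≠ 0 := zne _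
    have hinv : HasDerivAt (fun l : ℝ => (((2 * π * α + Real.log (l / 2) - Real.log t + Real.eulerMascheroniConstant : ℝ) : ℂ) + Complex.I * (π : ℝ) / 2)⁻¹)
        (-(((1 / lam : ℝ) : ℂ)) / ((((2 * π * α + Real.log (lam / 2) - Real.log t + Real.eulerMascheroniConstant : ℝ) : ℂ) + Complex.I * (π : ℝ) / 2) ^ 2)) lam := by
      have hcomp := ((hasFDerivAt_inv hzne').restrictScalars ℝ).comp_hasDerivAt lam hg
      refine hcomp.congr_deriv ?_
      simp [div_eq_mul_inv]
    have hfinal := hinv.const_mul (2 * (π : ℂ))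
    have heq : (fun l : ℝ => 2 * (π : ℂ) * (((2 * π * α + Real.log (l / 2) - Real.log t + Real.eulerMascheroniConstant : ℝ) : ℂ) + Complex.I * (π : ℝ) / 2)⁻¹) = m t := by
      funext l
      rw [hm t l, div_eq_mul_inv (2 * (π : ℂ))]
    rw [heq] at hfinal
    refine hfinal.congr_deriv ?_
    rw [← hz]
    have hlamne : (lam : ℂ) ≠ 0 := Complex.ofReal_ne_zero.mpr hlam.ne'
    field_simp
    rw [Complex.ofReal_div, Complex.ofReal_one, one_div, inv_mul_cancel₀ hlamne]
  · rw [norm_div, norm_mul, norm_neg]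
    have h1 : ‖2 * (π : ℂ)‖ = 2 * π := by
      simp [Complex.norm_real, abs_of_pos hpi]
    rw [h1, norm_pow, Complex.norm_real, Real.norm_eq_abs, abs_of_pos hlam]
    have : lam * (2 * π / (lam * ‖z‖ ^ 2)) = 2 * π / ‖z‖ ^ 2 := by
      field_simp
    rw [this]
    rw [div_le_div_iff₀ (by positivity) hpi]
    nlinarith [sq_nonneg (‖z‖ - π/2)]

end
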